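/- The number of sibling portraits of an n-gon inside a round gap of degree i, in which every polygon of the portrait maps one-to-one, equals the Fuss–Catalan number binomial(n·i, i)/((n−1)·i + 1). -/
import Mathlib


/-- Cyclic displacement (number of steps counterclockwise) from `a` to `x` among
`m` marked points on the circle. -/
def arcPos {m : ℕ} (a x : Fin m) : ℕ := (x.val + m - a.val) % m

/-- `t` lies strictly between `p` and `q` in counterclockwise cyclic order. -/
def CycBtw {m : ℕ} (p t q : Fin m) : Prop := 0 < arcPos p t ∧ arcPos p t < arcPos p q

/-- `q` is the next vertex of `S` counterclockwise after `p`. -/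
def IsNext {m : ℕ} (S : Finset (Fin m)) (p q : Fin m) : Prop :=
  p ∈ S ∧ q ∈ S ∧ p ≠ q ∧ ∀ r ∈ S, ¬ CycBtw p r q

/-- The label of a marked point: the points are cyclically labeled by repetitions
of the word `x_0 x_1 … x_{n-1}`. -/
def label (n : ℕ) {m : ℕ} (p : Fin m) : ZMod n := (p.val : ZMod n)

/-- `S` is a polygon visiting the labels in positive (counterclockwise) cyclic
order, i.e. its boundary maps forward as a positively oriented covering of the
boundary of the `n`-gon. -/
def IsPosPolygon (n : ℕ) {m : ℕ} (S : Finset (Fin m)) : Prop :=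
  2 ≤ S.card ∧ n ∣ S.card ∧ ∀ p q, IsNext S p q → label n q = label n p + 1

/-- Two vertex sets cross (link) on the circle. -/
def Crosses {m : ℕ} (S T : Finset (Fin m)) : Prop :=
  ∃ p ∈ S, ∃ q ∈ S, ∃ r ∈ T, ∃ s ∈ T, CycBtw p r q ∧ CycBtw q s p

/-- A sibling portrait of the `n`-gon in a round gap of degree `D`: a collection of
pairwise disjoint, non-crossing, positively oriented polygons using all `D*n`
preimage points (so that together `D` sides map to each side of the `n`-gon). -/
def IsPortrait (D n : ℕ) (PP : Finset (Finset (Fin (D * n)))) : Prop :=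
  (∀ S ∈ PP, IsPosPolygon n S) ∧
  (∀ S ∈ PP, ∀ T ∈ PP, S ≠ T → Disjoint S T ∧ ¬ Crosses S T) ∧
  (∀ p : Fin (D * n), ∃ S ∈ PP, p ∈ S)

-- Section 1: linearization
lemma arcPos_eq {m : ℕ} (a x : Fin m) :
    arcPos a x = if a.val ≤ x.val then x.val - a.val else x.val + m - a.val := by
  have ha := a.isLt; have hx := x.isLt
  unfold arcPos
  split_ifs with h
  · have h1 : x.val + m - a.val = (x.val - a.val) + m := by omega
    rw [h1, Nat.add_mod_right, Nat.mod_eq_of_lt (by omega)]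
  · exact Nat.mod_eq_of_lt (by omega)

lemma arcPos_lt {m : ℕ} (a x : Fin m) : arcPos a x < m := by
  have := x.isLt; rw [arcPos_eq]; have := a.isLt; split_ifs <;> omega

lemma arcPos_pos_iff {m : ℕ} (a x : Fin m) : 0 < arcPos a x ↔ a ≠ x := by
  rw [arcPos_eq, Ne, Fin.ext_iff]
  have := a.isLt; have := x.isLt
  split_ifs <;> omega

lemma cycBtw_iff {m : ℕ} (p t q : Fin m) :
    CycBtw p t q ↔ (p.val < t.val ∧ t.val < q.val) ∨ (t.val < q.val ∧ q.val < p.val) ∨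
      (q.val < p.val ∧ p.val < t.val) := by
  unfold CycBtw
  rw [arcPos_eq, arcPos_eq]
  have := p.isLt; have := t.isLt; have := q.isLt
  split_ifs <;> omega

lemma cycBtw_tri {m : ℕ} {p q s : Fin m} (hpq : p ≠ q) (hsp : s ≠ p) (hsq : s ≠ q) :
    CycBtw p s q ∨ CycBtw q s p := by
  rw [cycBtw_iff, cycBtw_iff]
  rw [Ne, Fin.ext_iff] at hpq hsp hsq
  omega

def Alt {m : ℕ} (S T : Finset (Fin m)) : Prop :=
  ∃ p ∈ S, ∃ r ∈ T, ∃ q ∈ S, ∃ s ∈ T, p < r ∧ r < q ∧ q < s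

lemma crosses_iff {m : ℕ} (S T : Finset (Fin m)) :
    Crosses S T ↔ Alt S T ∨ Alt T S := by
  constructor
  · rintro ⟨p, hp, q, hq, r, hr, s, hs, h1, h2⟩
    rw [cycBtw_iff] at h1 h2
    rcases h1 with ⟨a1, a2⟩ | ⟨a1, a2⟩ | ⟨a1, a2⟩ <;>
      rcases h2 with ⟨b1, b2⟩ | ⟨b1, b2⟩ | ⟨b1, b2⟩
    case _ => omega
    case _ => exact Or.inr ⟨s, hs, p, hp, r, hr, q, hq,
        Fin.lt_def.2 (by omega), Fin.lt_def.2 (by omega), Fin.lt_def.2 (by omega)⟩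
    case _ => exact Or.inl ⟨p, hp, r, hr, q, hq, s, hs,
        Fin.lt_def.2 (by omega), Fin.lt_def.2 (by omega), Fin.lt_def.2 (by omega)⟩
    case _ => exact Or.inr ⟨r, hr, q, hq, s, hs, p, hp,
        Fin.lt_def.2 (by omega), Fin.lt_def.2 (by omega), Fin.lt_def.2 (by omega)⟩
    case _ => omega
    case _ => omega
    case _ => exact Or.inl ⟨q, hq, s, hs, p, hp, r, hr,
        Fin.lt_def.2 (by omega), Fin.lt_def.2 (by omega), Fin.lt_def.2 (by omega)⟩
    case _ => omega
    case _ => omega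
  · rintro (⟨p, hp, r, hr, q, hq, s, hs, h1, h2, h3⟩ | ⟨p, hp, r, hr, q, hq, s, hs, h1, h2, h3⟩) <;>
      rw [Fin.lt_def] at h1 h2 h3
    · exact ⟨p, hp, q, hq, r, hr, s, hs, (cycBtw_iff _ _ _).2 (by omega),
        (cycBtw_iff _ _ _).2 (by omega)⟩
    · exact ⟨r, hr, s, hs, q, hq, p, hp, (cycBtw_iff _ _ _).2 (by omega),
        (cycBtw_iff _ _ _).2 (by omega)⟩

-- Section 2
instance {m : ℕ} (p t q : Fin m) : Decidable (CycBtw p t q) := by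
  unfold CycBtw; infer_instance

lemma arcPos_padd {m : ℕ} (p : Fin m) {j : ℕ} (hj : j < m) :
    arcPos p ⟨(p.val + j) % m, Nat.mod_lt _ p.pos⟩ = j := by
  have hp := p.isLt
  rcases lt_or_ge (p.val + j) m with h | h
  · rw [arcPos_eq]
    simp only [Nat.mod_eq_of_lt h]
    split_ifs <;> omega
  · have h2 : (p.val + j) % m = p.val + j - m := by
      rw [Nat.mod_eq_sub_mod h, Nat.mod_eq_of_lt (by omega)]
    rw [arcPos_eq]
    simp only [h2]
    split_ifs <;> omega

lemma padd_arcPos {m : ℕ} (p t : Fin m) :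
    (⟨(p.val + arcPos p t) % m, Nat.mod_lt _ p.pos⟩ : Fin m) = t := by
  have hp := p.isLt; have ht := t.isLt
  apply Fin.ext
  simp only [arcPos_eq]
  split_ifs with h
  · simp only [Nat.mod_eq_of_lt (show p.val + (t.val - p.val) < m by omega)]
    omega
  · have : p.val + (t.val + m - p.val) = t.val + m := by omega
    rw [this, Nat.add_mod_right, Nat.mod_eq_of_lt ht]

lemma card_arc {m : ℕ} {p q : Fin m} (hpq : p ≠ q) :
    (Finset.univ.filter (fun t => CycBtw p t q)).card = arcPos p q - 1 := by
  rw [show arcPos p q - 1 = (Finset.Ioo 0 (arcPos p q)).card by rw [Nat.card_Ioo]; omega]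
  apply Finset.card_bij' (fun t _ => arcPos p t)
    (fun j hj => ⟨(p.val + j) % m, Nat.mod_lt _ p.pos⟩)
  · intro t ht
    rw [Finset.mem_filter] at ht
    exact Finset.mem_Ioo.2 ⟨ht.2.1, ht.2.2⟩
  · intro j hj
    rw [Finset.mem_Ioo] at hj
    have hjm : j < m := hj.2.trans (arcPos_lt p q)
    rw [Finset.mem_filter]
    refine ⟨Finset.mem_univ _, ?_, ?_⟩ <;> rw [arcPos_padd p hjm]
    exacts [hj.1, hj.2]
  · intro t ht; exact padd_arcPos p t
  · intro j hj
    rw [Finset.mem_Ioo] at hj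
    exact arcPos_padd p (hj.2.trans (arcPos_lt p q))

def IsNCP (n : ℕ) {m : ℕ} (G : Finset (Fin m)) (P : Finset (Finset (Fin m))) : Prop :=
  (∀ S ∈ P, S.card = n) ∧
  (∀ S ∈ P, ∀ T ∈ P, S ≠ T → Disjoint S T ∧ ¬ Alt S T ∧ ¬ Alt T S) ∧
  (∀ S ∈ P, S ⊆ G) ∧ (∀ p ∈ G, ∃ S ∈ P, p ∈ S)

lemma portrait_iff {i n : ℕ} (hn : 2 ≤ n) (PP : Finset (Finset (Fin (i * n)))) :
    (IsPortrait i n PP ∧ ∀ S ∈ PP, S.card = n) ↔ IsNCP n Finset.univ PP := by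
  constructor
  · rintro ⟨⟨_, hdis, hcov⟩, hcard⟩
    refine ⟨hcard, fun S hS T hT hST => ?_, fun S _ => Finset.subset_univ S,
      fun p _ => hcov p⟩
    obtain ⟨h1, h2⟩ := hdis S hS T hT hST
    rw [crosses_iff] at h2
    push_neg at h2
    exact ⟨h1, h2⟩
  · rintro ⟨hcard, hdis, _, hcov⟩
    refine ⟨⟨fun S hS => ?_, fun S hS T hT hST => ⟨(hdis S hS T hT hST).1, ?_⟩,
      fun p => hcov p (Finset.mem_univ p)⟩, hcard⟩
    swap
    · rw [crosses_iff]
      rintro (h | h)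
      exacts [(hdis S hS T hT hST).2.1 h, (hdis S hS T hT hST).2.2 h]
    refine ⟨by rw [hcard S hS]; exact hn, by rw [hcard S hS], ?_⟩
    rintro p q ⟨hp, hq, hpq, hnext⟩
    -- the open arc from p to q is a disjoint union of blocks
    set A := Finset.univ.filter (fun t => CycBtw p t q) with hA
    have hblocks : ∀ t ∈ A, ∃ T ∈ PP, t ∈ T ∧ T ⊆ A := by
      intro t ht
      rw [hA, Finset.mem_filter] at ht
      obtain ⟨T, hT, htT⟩ := hcov t (Finset.mem_univ t)
      have hTS : T ≠ S := by
        rintro rfl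
        exact hnext t htT ht.2
      refine ⟨T, hT, htT, fun s' hs' => ?_⟩
      rw [hA, Finset.mem_filter]
      refine ⟨Finset.mem_univ _, ?_⟩
      by_contra hnb
      have hd := hdis S hS T hT (Ne.symm hTS)
      have hsp : s' ≠ p := fun h => Finset.disjoint_left.1 hd.1 hp (h ▸ hs')
      have hsq : s' ≠ q := fun h => Finset.disjoint_left.1 hd.1 hq (h ▸ hs')
      rcases cycBtw_tri hpq hsp hsq with h | h
      · exact hnb h
      · have hcr : Crosses S T := ⟨p, hp, q, hq, t, htT, s', hs', ht.2, h⟩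
        rw [crosses_iff] at hcr
        rcases hcr with h' | h'
        exacts [hd.2.1 h', hd.2.2 h']
    have hAeq : A = (PP.filter (fun T => T ⊆ A)).biUnion (fun T => T) := by
      apply Finset.Subset.antisymm
      · intro t ht
        obtain ⟨T, hT, htT, hTA⟩ := hblocks t ht
        exact Finset.mem_biUnion.2 ⟨T, Finset.mem_filter.2 ⟨hT, hTA⟩, htT⟩
      · intro t ht
        obtain ⟨T, hT, htT⟩ := Finset.mem_biUnion.1 ht
        exact (Finset.mem_filter.1 hT).2 htT
    have hdvd : n ∣ A.card := by
      rw [hAeq, Finset.card_biUnion (fun T hT T' hT' hTT' =>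
        (hdis T (Finset.mem_filter.1 hT).1 T' (Finset.mem_filter.1 hT').1 hTT').1)]
      exact ⟨(PP.filter (fun T => T ⊆ A)).card, by
        rw [Finset.sum_congr rfl (fun T hT => hcard T (Finset.mem_filter.1 hT).1),
          Finset.sum_const, smul_eq_mul, mul_comm]⟩
    rw [card_arc hpq] at hdvd
    have hpos : 0 < arcPos p q := (arcPos_pos_iff p q).2 hpq
    obtain ⟨k, hk⟩ := hdvd
    have harc : arcPos p q = n * k + 1 := by omega
    have hq' : q.val = (p.val + arcPos p q) % (i * n) := by
      conv_lhs => rw [← padd_arcPos p q]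
    have hndvd : n ∣ i * n := dvd_mul_left n i
    unfold label
    rw [hq']
    have h1 : ((p.val + arcPos p q) % (i*n)) % n = (p.val + arcPos p q) % n :=
      Nat.mod_mod_of_dvd _ hndvd
    calc ((((p.val + arcPos p q) % (i*n)) : ℕ) : ZMod n)
        = ((((p.val + arcPos p q) % (i*n)) % n : ℕ) : ZMod n) := (ZMod.natCast_mod _ n).symm
      _ = (((p.val + arcPos p q) % n : ℕ) : ZMod n) := by rw [h1]
      _ = ((p.val + arcPos p q : ℕ) : ZMod n) := ZMod.natCast_mod _ n
      _ = (p.val : ZMod n) + 1 := by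
          rw [harc]; push_cast [ZMod.natCast_self]; ring

-- Section 3: partitions ↔ minima sets
section Minima

variable {m : ℕ} [NeZero m]

def mn (S : Finset (Fin m)) : Fin m :=
  if h : S.Nonempty then S.min' h else ⟨0, Nat.pos_of_ne_zero (NeZero.ne m)⟩

def mins (P : Finset (Finset (Fin m))) : Finset (Fin m) := P.image mn

def Good (n : ℕ) (G M : Finset (Fin m)) : Prop :=
  M ⊆ G ∧ ∀ g ∈ G, (G.filter (· ≤ g)).card ≤ n * ((M.filter (· ≤ g)).card)

lemma mn_mem {S : Finset (Fin m)} (h : S.Nonempty) : mn S ∈ S := by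
  rw [mn, dif_pos h]; exact S.min'_mem h

lemma mn_le {S : Finset (Fin m)} {x : Fin m} (h : x ∈ S) : mn S ≤ x := by
  rw [mn, dif_pos ⟨x, h⟩]; exact S.min'_le x h

lemma mn_eq {S : Finset (Fin m)} {a : Fin m} (h : a ∈ S) (h2 : ∀ x ∈ S, a ≤ x) :
    mn S = a := le_antisymm (mn_le h) (h2 _ (mn_mem ⟨a, h⟩))

variable {n : ℕ} {G : Finset (Fin m)} {P Q : Finset (Finset (Fin m))}

lemma block_nonempty (hn : 0 < n) (hP : IsNCP n G P) {S : Finset (Fin m)} (hS : S ∈ P) :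
    S.Nonempty := Finset.card_pos.1 (by rw [hP.1 S hS]; exact hn)

lemma mn_injOn (hn : 0 < n) (hP : IsNCP n G P) :
    ∀ S ∈ P, ∀ T ∈ P, mn S = mn T → S = T := by
  intro S hS T hT h
  by_contra hST
  exact Finset.disjoint_left.1 (hP.2.1 S hS T hT hST).1 (mn_mem (block_nonempty hn hP hS))
    (h ▸ mn_mem (block_nonempty hn hP hT))

lemma mins_card (hn : 0 < n) (hP : IsNCP n G P) : (mins P).card = P.card :=
  Finset.card_image_of_injOn (mn_injOn hn hP)

lemma ncp_G_eq (hP : IsNCP n G P) : G = P.biUnion (fun T => T) := by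
  apply Finset.Subset.antisymm
  · intro g hg
    obtain ⟨S, hS, hgS⟩ := hP.2.2.2 g hg
    exact Finset.mem_biUnion.2 ⟨S, hS, hgS⟩
  · intro g hg
    obtain ⟨S, hS, hgS⟩ := Finset.mem_biUnion.1 hg
    exact hP.2.2.1 S hS hgS

lemma ncp_G_card (hP : IsNCP n G P) : G.card = n * P.card := by
  rw [ncp_G_eq hP, Finset.card_biUnion (fun S hS T hT hST => (hP.2.1 S hS T hT hST).1),
    Finset.sum_congr rfl (fun S hS => hP.1 S hS), Finset.sum_const, smul_eq_mul, mul_comm]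

lemma good_mins (hn : 0 < n) (hP : IsNCP n G P) : Good n G (mins P) := by
  constructor
  · intro x hx
    obtain ⟨S, hS, rfl⟩ := Finset.mem_image.1 hx
    exact hP.2.2.1 S hS (mn_mem (block_nonempty hn hP hS))
  · intro g hg
    have hsub : G.filter (· ≤ g) ⊆ (P.filter (fun S => mn S ≤ g)).biUnion (fun T => T) := by
      intro x hx
      rw [Finset.mem_filter] at hx
      obtain ⟨S, hS, hxS⟩ := hP.2.2.2 x hx.1
      exact Finset.mem_biUnion.2 ⟨S, Finset.mem_filter.2 ⟨hS, le_trans (mn_le hxS) hx.2⟩, hxS⟩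
    have hcnt : ((mins P).filter (· ≤ g)).card = (P.filter (fun S => mn S ≤ g)).card := by
      rw [mins, Finset.filter_image]
      exact Finset.card_image_of_injOn (fun S hS T hT h =>
        mn_injOn hn hP S (Finset.mem_filter.1 hS).1 T (Finset.mem_filter.1 hT).1 h)
    calc (G.filter (· ≤ g)).card
        ≤ ((P.filter (fun S => mn S ≤ g)).biUnion (fun T => T)).card :=
          Finset.card_le_card hsub
      _ = ∑ T ∈ P.filter (fun S => mn S ≤ g), T.card :=
          Finset.card_biUnion (fun S hS T hT hST =>
            (hP.2.1 S (Finset.mem_filter.1 hS).1 T (Finset.mem_filter.1 hT).1 hST).1)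
      _ = (P.filter (fun S => mn S ≤ g)).card * n := by
          rw [Finset.sum_congr rfl (fun S hS => hP.1 S (Finset.mem_filter.1 hS).1),
            Finset.sum_const, smul_eq_mul]
      _ = n * ((mins P).filter (· ≤ g)).card := by rw [hcnt, mul_comm]

lemma ncp_empty (hP : IsNCP n G P) (hn : 0 < n) (hG : G = ∅) : P = ∅ := by
  rcases Finset.eq_empty_or_nonempty P with h | h
  · exact h
  · obtain ⟨S, hS⟩ := h
    obtain ⟨x, hx⟩ := block_nonempty hn hP hS
    exact absurd (hP.2.2.1 S hS hx) (by simp [hG])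

lemma ncp_erase (hP : IsNCP n G P) {S : Finset (Fin m)} (hS : S ∈ P) :
    IsNCP n (G \ S) (P.erase S) := by
  obtain ⟨h1, h2, h3, h4⟩ := hP
  refine ⟨fun T hT => h1 T (Finset.mem_of_mem_erase hT),
    fun T hT T' hT' => h2 T (Finset.mem_of_mem_erase hT) T' (Finset.mem_of_mem_erase hT'),
    fun T hT x hx => ?_, fun g hg => ?_⟩
  · rw [Finset.mem_sdiff]
    refine ⟨h3 T (Finset.mem_of_mem_erase hT) hx, fun hxS => ?_⟩
    exact Finset.disjoint_left.1 (h2 T (Finset.mem_of_mem_erase hT) S hS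
      (Finset.ne_of_mem_erase hT)).1 hx hxS
  · rw [Finset.mem_sdiff] at hg
    obtain ⟨T, hT, hgT⟩ := h4 g hg.1
    refine ⟨T, Finset.mem_erase.2 ⟨fun h => hg.2 (h ▸ hgT), hT⟩, hgT⟩

lemma mins_erase (hn : 0 < n) (hP : IsNCP n G P) {S : Finset (Fin m)} (hS : S ∈ P) :
    mins (P.erase S) = (mins P).erase (mn S) := by
  ext x
  simp only [mins, Finset.mem_image, Finset.mem_erase]
  constructor
  · rintro ⟨T, hT, rfl⟩
    exact ⟨fun h => hT.1 (mn_injOn hn hP T hT.2 S hS h), T, hT.2, rfl⟩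
  · rintro ⟨hx, T, hT, rfl⟩
    exact ⟨T, ⟨fun h => hx (by rw [h]), hT⟩, rfl⟩

lemma block_max_interval (hn : 0 < n) (hP : IsNCP n G P) {S : Finset (Fin m)} (hS : S ∈ P)
    (hmax : ∀ T ∈ P, mn T ≤ mn S) {g : Fin m} (hg : g ∈ G) (h1 : mn S ≤ g)
    (h2 : g ≤ S.max' (block_nonempty hn hP hS)) : g ∈ S := by
  by_contra hgS
  obtain ⟨T, hT, hgT⟩ := hP.2.2.2 g hg
  have hTS : T ≠ S := fun h => hgS (h ▸ hgT)
  have hTne := block_nonempty hn hP hT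
  have hmnTS : mn T < mn S :=
    lt_of_le_of_ne (hmax T hT) (fun h => hTS (mn_injOn hn hP T hT S hS h))
  have hg1 : mn S < g := lt_of_le_of_ne h1 (fun h => hgS (h ▸ mn_mem (block_nonempty hn hP hS)))
  have hg2 : g < S.max' (block_nonempty hn hP hS) :=
    lt_of_le_of_ne h2 (fun h => hgS (h ▸ S.max'_mem _))
  have hAlt : Alt T S := ⟨mn T, mn_mem hTne, mn S, mn_mem (block_nonempty hn hP hS), g, hgT,
    S.max' _, S.max'_mem _, lt_of_lt_of_le hmnTS (le_refl _), hg1, hg2⟩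
  exact (hP.2.1 T hT S hS hTS).2.1 hAlt

lemma block_max_eq (hn : 0 < n) (hP : IsNCP n G P) (hQ : IsNCP n G Q)
    {S T : Finset (Fin m)} (hS : S ∈ P) (hT : T ∈ Q)
    (hmaxP : ∀ U ∈ P, mn U ≤ mn S) (hmaxQ : ∀ U ∈ Q, mn U ≤ mn T)
    (hmn : mn S = mn T) : S = T := by
  have hcS : S.card = n := hP.1 S hS
  have hcT : T.card = n := hQ.1 T hT
  rcases le_total (S.max' (block_nonempty hn hP hS)) (T.max' (block_nonempty hn hQ hT)) with h | h
  · apply Finset.eq_of_subset_of_card_le _ (by rw [hcS, hcT])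
    intro x hx
    exact block_max_interval hn hQ hT hmaxQ (hP.2.2.1 S hS hx)
      (hmn ▸ mn_le hx)
      (le_trans (S.le_max' x hx) h)
  · apply (Finset.eq_of_subset_of_card_le _ (by rw [hcS, hcT])).symm
    intro x hx
    exact block_max_interval hn hP hS hmaxP (hQ.2.2.1 T hT hx)
      (hmn ▸ mn_le hx)
      (le_trans (T.le_max' x hx) h)

end Minima

-- Section 4: uniqueness and existence
section ExtExists

variable {m : ℕ} [NeZero m] {n : ℕ}

lemma ncp_ext (hn : 0 < n) :
    ∀ (N : ℕ) (G : Finset (Fin m)) (P Q : Finset (Finset (Fin m))), G.card ≤ N →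
      IsNCP n G P → IsNCP n G Q → mins P = mins Q → P = Q := by
  intro N
  induction N with
  | zero =>
    intro G P Q hcard hP hQ _
    have hG : G = ∅ := Finset.card_eq_zero.1 (Nat.le_zero.1 hcard)
    rw [ncp_empty hP hn hG, ncp_empty hQ hn hG]
  | succ N ih =>
    intro G P Q hcard hP hQ hmins
    rcases Finset.eq_empty_or_nonempty G with hG | hG
    · rw [ncp_empty hP hn hG, ncp_empty hQ hn hG]
    · obtain ⟨g, hg⟩ := hG
      obtain ⟨S0, hS0, _⟩ := hP.2.2.2 g hg
      have hPne : (mins P).Nonempty := ⟨mn S0, Finset.mem_image_of_mem mn hS0⟩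
      set a := (mins P).max' hPne with ha
      obtain ⟨S, hS, hmnS⟩ := Finset.mem_image.1 ((mins P).max'_mem hPne)
      obtain ⟨T, hT, hmnT⟩ := Finset.mem_image.1
        (show a ∈ mins Q from hmins ▸ (mins P).max'_mem hPne)
      have hmaxP : ∀ U ∈ P, mn U ≤ mn S := fun U hU =>
        hmnS ▸ (mins P).le_max' (mn U) (Finset.mem_image_of_mem mn hU)
      have hmaxQ : ∀ U ∈ Q, mn U ≤ mn T := fun U hU => by
        rw [hmnT]
        exact (mins P).le_max' (mn U) (by rw [hmins]; exact Finset.mem_image_of_mem mn hU)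
      have hST : S = T := block_max_eq hn hP hQ hS hT hmaxP hmaxQ (by rw [hmnS, hmnT])
      subst hST
      have hSG : S ⊆ G := hP.2.2.1 S hS
      have hScard : S.card = n := hP.1 S hS
      have hG'card : (G \ S).card ≤ N := by
        rw [Finset.card_sdiff_of_subset hSG, hScard]
        have : 0 < G.card := Finset.card_pos.2 ⟨g, hg⟩
        omega
      have h1 := ncp_erase hP hS
      have h2 := ncp_erase hQ hT
      have h3 : mins (P.erase S) = mins (Q.erase S) := by
        rw [mins_erase hn hP hS, mins_erase hn hQ hT, hmins]
      have := ih (G \ S) (P.erase S) (Q.erase S) hG'card h1 h2 h3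
      rw [← Finset.insert_erase hS, ← Finset.insert_erase hT, this]

lemma exists_initial_seg :
    ∀ (k : ℕ) (Ga : Finset (Fin m)), k ≤ Ga.card →
      ∃ S, S ⊆ Ga ∧ S.card = k ∧ ∀ x ∈ S, ∀ y ∈ Ga, y ∉ S → x < y := by
  intro k
  induction k with
  | zero => exact fun Ga _ => ⟨∅, Finset.empty_subset _, Finset.card_empty, by simp⟩
  | succ k ih =>
    intro Ga hk
    have hne : Ga.Nonempty := Finset.card_pos.1 (by omega)
    set m0 := Ga.min' hne with hm0
    have hm0mem : m0 ∈ Ga := Ga.min'_mem hne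
    obtain ⟨S', hS'sub, hS'card, hS'init⟩ := ih (Ga.erase m0)
      (by rw [Finset.card_erase_of_mem hm0mem]; omega)
    have hm0S' : m0 ∉ S' := fun h => (Finset.mem_erase.1 (hS'sub h)).1 rfl
    refine ⟨insert m0 S', ?_, ?_, ?_⟩
    · exact Finset.insert_subset hm0mem (hS'sub.trans (Finset.erase_subset _ _))
    · rw [Finset.card_insert_of_notMem hm0S', hS'card]
    · intro x hx y hy hyS
      have hym0 : y ≠ m0 := fun h => hyS (h ▸ Finset.mem_insert_self _ _)
      have hyS' : y ∉ S' := fun h => hyS (Finset.mem_insert_of_mem h)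
      rcases Finset.mem_insert.1 hx with rfl | hx
      · exact lt_of_le_of_ne (Ga.min'_le y hy) (Ne.symm hym0)
      · exact hS'init x hx y (Finset.mem_erase.2 ⟨hym0, hy⟩) hyS'

lemma ncp_exists (hn : 0 < n) :
    ∀ (N : ℕ) (G M : Finset (Fin m)), G.card ≤ N → Good n G M → G.card = n * M.card →
      ∃ P, IsNCP n G P ∧ mins P = M := by
  intro N
  induction N with
  | zero =>
    intro G M hcard hGood hGcard
    have hG : G = ∅ := Finset.card_eq_zero.1 (Nat.le_zero.1 hcard)
    have hM : M = ∅ := Finset.subset_empty.1 (hG ▸ hGood.1)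
    exact ⟨∅, ⟨by simp, by simp, by simp, by simp [hG]⟩, by simp [mins, hM]⟩
  | succ N ih =>
    intro G M hcard hGood hGcard
    rcases Finset.eq_empty_or_nonempty G with hG | hG
    · have hM : M = ∅ := Finset.subset_empty.1 (hG ▸ hGood.1)
      exact ⟨∅, ⟨by simp, by simp, by simp, by simp [hG]⟩, by simp [mins, hM]⟩
    have hMne : M.Nonempty := by
      rcases Finset.eq_empty_or_nonempty M with h | h
      · rw [h, Finset.card_empty, mul_zero] at hGcard
        exact absurd (Finset.card_eq_zero.1 hGcard) (Finset.nonempty_iff_ne_empty.1 hG)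
      · exact h
    set a := M.max' hMne with ha
    have haM : a ∈ M := M.max'_mem hMne
    have haG : a ∈ G := hGood.1 haM
    set Ga := G.filter (a ≤ ·) with hGa
    have hGasub : Ga ⊆ G := Finset.filter_subset _ _
    obtain ⟨c, hc⟩ : ∃ c, M.card = c + 1 := ⟨M.card - 1, by
      have := Finset.card_pos.2 hMne; omega⟩
    -- Ga has at least n elements
    have hGacard : n ≤ Ga.card := by
      set Gl := G.filter (· < a) with hGl
      have hsplit : Gl.card + Ga.card = G.card := by
        have h := Finset.card_filter_add_card_filter_not (s := G) (p := (· < a))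
        simpa [hGl, hGa, not_lt] using h
      rcases Finset.eq_empty_or_nonempty Gl with hGlE | hGlne
      · rw [hGlE, Finset.card_empty, zero_add] at hsplit
        rw [hsplit, hGcard, hc, Nat.mul_succ]
        omega
      · set g0 := Gl.max' hGlne with hg0
        have hg0Gl : g0 ∈ Gl := Gl.max'_mem hGlne
        have hg0G : g0 ∈ G := (Finset.filter_subset _ _) hg0Gl
        have hg0a : g0 < a := (Finset.mem_filter.1 hg0Gl).2
        have hGf : G.filter (· ≤ g0) = Gl := by
          ext x
          simp only [Finset.mem_filter, hGl]
          constructor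
          · rintro ⟨h1, h2⟩; exact ⟨h1, lt_of_le_of_lt h2 hg0a⟩
          · rintro ⟨h1, h2⟩; exact ⟨h1, Gl.le_max' x (Finset.mem_filter.2 ⟨h1, h2⟩)⟩
        have hMf : M.filter (· ≤ g0) ⊆ M.erase a := by
          intro x hx
          rw [Finset.mem_filter] at hx
          exact Finset.mem_erase.2 ⟨fun h => absurd (h ▸ hx.2) (not_le.2 hg0a), hx.1⟩
        have h1 := hGood.2 g0 hg0G
        rw [hGf] at h1
        have h2 : (M.filter (· ≤ g0)).card ≤ c :=
          le_trans (Finset.card_le_card hMf) (by rw [Finset.card_erase_of_mem haM]; omega)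
        have h3 : Gl.card ≤ n * c := le_trans h1 (Nat.mul_le_mul_left n h2)
        rw [hGcard, hc, Nat.mul_succ] at hsplit
        omega
    obtain ⟨S, hSGa, hScard, hSinit⟩ := exists_initial_seg n Ga hGacard
    have hSG : S ⊆ G := hSGa.trans hGasub
    have haGa : a ∈ Ga := Finset.mem_filter.2 ⟨haG, le_refl a⟩
    have haS : a ∈ S := by
      by_contra haS
      obtain ⟨x, hx⟩ : S.Nonempty := Finset.card_pos.1 (by omega)
      exact absurd ((Finset.mem_filter.1 (hSGa hx)).2) (not_le.2 (hSinit x hx a haGa haS))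
    have hSge : ∀ x ∈ S, a ≤ x := fun x hx => (Finset.mem_filter.1 (hSGa hx)).2
    set G' := G \ S with hG'
    set M' := M.erase a with hM'
    have hM'G' : M' ⊆ G' := by
      intro x hx
      rw [hM', Finset.mem_erase] at hx
      rw [hG', Finset.mem_sdiff]
      refine ⟨hGood.1 hx.2, fun hxS => hx.1 (le_antisymm (M.le_max' x hx.2) (hSge x hxS))⟩
    have hG'card : G'.card = n * M'.card := by
      rw [hG', Finset.card_sdiff_of_subset hSG, hScard, hM', Finset.card_erase_of_mem haM,
        hGcard, hc]
      simp only [Nat.add_sub_cancel, Nat.mul_succ]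
    have hG'le : G'.card ≤ N := by
      rw [hG', Finset.card_sdiff_of_subset hSG, hScard]
      have : 0 < G.card := Finset.card_pos.2 hG
      omega
    have hGood' : Good n G' M' := by
      refine ⟨hM'G', fun g hg => ?_⟩
      rw [hG', Finset.mem_sdiff] at hg
      rcases le_or_gt a g with hag | hga
      · -- a ≤ g : S is inside the prefix
        have hgGa : g ∈ Ga := Finset.mem_filter.2 ⟨hg.1, hag⟩
        have hSpre : S ⊆ G.filter (· ≤ g) := fun x hx =>
          Finset.mem_filter.2 ⟨hSG hx, le_of_lt (hSinit x hx g hgGa hg.2)⟩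
        have hGeq : G'.filter (· ≤ g) = (G.filter (· ≤ g)) \ S := by
          ext x
          simp only [hG', Finset.mem_filter, Finset.mem_sdiff]
          tauto
        have hMeq : M'.filter (· ≤ g) = (M.filter (· ≤ g)).erase a := by
          ext x
          simp only [hM', Finset.mem_filter, Finset.mem_erase]
          tauto
        have haMf : a ∈ M.filter (· ≤ g) := Finset.mem_filter.2 ⟨haM, hag⟩
        rw [hGeq, hMeq, Finset.card_sdiff_of_subset hSpre, hScard, Finset.card_erase_of_mem haMf]
        have h1 := hGood.2 g hg.1
        have h2 : 0 < (M.filter (· ≤ g)).card := Finset.card_pos.2 ⟨a, haMf⟩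
        obtain ⟨d, hd⟩ : ∃ d, (M.filter (· ≤ g)).card = d + 1 := ⟨(M.filter (· ≤ g)).card - 1, by omega⟩
        rw [hd] at h1 ⊢
        rw [Nat.mul_succ] at h1
        simp only [Nat.add_sub_cancel]
        omega
      · -- g < a : S doesn't intersect the prefix
        have hGeq : G'.filter (· ≤ g) = G.filter (· ≤ g) := by
          ext x
          simp only [hG', Finset.mem_filter, Finset.mem_sdiff]
          refine ⟨fun h => ⟨h.1.1, h.2⟩, fun h => ⟨⟨h.1, fun hxS => ?_⟩, h.2⟩⟩
          exact absurd (lt_of_le_of_lt (le_trans (hSge x hxS) h.2) hga) (lt_irrefl a)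
        have hMeq : M'.filter (· ≤ g) = M.filter (· ≤ g) := by
          ext x
          simp only [hM', Finset.mem_filter, Finset.mem_erase]
          refine ⟨fun h => ⟨h.1.2, h.2⟩, fun h => ⟨⟨fun hxa => ?_, h.1⟩, h.2⟩⟩
          subst hxa
          exact absurd (lt_of_le_of_lt h.2 hga) (lt_irrefl _)
        rw [hGeq, hMeq]
        exact hGood.2 g hg.1
    obtain ⟨P', hP', hminsP'⟩ := ih G' M' hG'le hGood' hG'card
    have hSnotP' : S ∉ P' := by
      intro h
      have := hP'.2.2.1 S h haS
      rw [hG', Finset.mem_sdiff] at this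
      exact this.2 haS
    refine ⟨insert S P', ⟨?_, ?_, ?_, ?_⟩, ?_⟩
    · intro T hT
      rcases Finset.mem_insert.1 hT with rfl | hT
      · exact hScard
      · exact hP'.1 T hT
    · -- pairwise disjoint and non-crossing
      have key : ∀ T ∈ P', Disjoint S T ∧ ¬ Alt S T ∧ ¬ Alt T S := by
        intro T hT
        have hTG' : T ⊆ G' := hP'.2.2.1 T hT
        have hdisj : Disjoint S T := by
          rw [Finset.disjoint_left]
          intro x hxS hxT
          have := hTG' hxT
          rw [hG', Finset.mem_sdiff] at this
          exact this.2 hxS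
        refine ⟨hdisj, ?_, ?_⟩
        · rintro ⟨p, hp, r, hr, q, hq, s, hs, h1, h2, h3⟩
          have hrG : r ∈ Ga := Finset.mem_filter.2
            ⟨by have := hTG' hr; rw [hG', Finset.mem_sdiff] at this; exact this.1,
             le_trans (hSge p hp) (le_of_lt h1)⟩
          have hrS : r ∉ S := Finset.disjoint_right.1 hdisj hr
          exact absurd h2 (not_lt.2 (le_of_lt (hSinit q hq r hrG hrS)))
        · rintro ⟨p, hp, r, hr, q, hq, s, hs, h1, h2, h3⟩
          have hqG : q ∈ Ga := Finset.mem_filter.2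
            ⟨by have := hTG' hq; rw [hG', Finset.mem_sdiff] at this; exact this.1,
             le_trans (hSge r hr) (le_of_lt h2)⟩
          have hqS : q ∉ S := Finset.disjoint_right.1 hdisj hq
          exact absurd h3 (not_lt.2 (le_of_lt (hSinit s hs q hqG hqS)))
      intro T hT U hU hTU
      rcases Finset.mem_insert.1 hT with hTS | hT
      · rcases Finset.mem_insert.1 hU with hUS | hU
        · exact absurd (hTS.trans hUS.symm) hTU
        · rw [hTS]; exact key U hU
      · rcases Finset.mem_insert.1 hU with hUS | hU
        · rw [hUS]
          obtain ⟨h1, h2, h3⟩ := key T hT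
          exact ⟨h1.symm, h3, h2⟩
        · exact hP'.2.1 T hT U hU hTU
    · intro T hT
      rcases Finset.mem_insert.1 hT with rfl | hT
      · exact hSG
      · exact (hP'.2.2.1 T hT).trans (by rw [hG']; exact Finset.sdiff_subset)
    · intro g hg
      by_cases hgS : g ∈ S
      · exact ⟨S, Finset.mem_insert_self _ _, hgS⟩
      · obtain ⟨T, hT, hgT⟩ := hP'.2.2.2 g (by rw [hG', Finset.mem_sdiff]; exact ⟨hg, hgS⟩)
        exact ⟨T, Finset.mem_insert_of_mem hT, hgT⟩
    · rw [mins, Finset.image_insert, ← mins, hminsP', hM']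
      rw [mn_eq haS hSge]
      exact Finset.insert_erase haM

end ExtExists

-- Section 5: cycle lemma
section Cycle

variable {m : ℕ}

def ind (B : Finset (Fin (m+1))) (j : ℕ) : ℕ :=
  if (⟨j % (m+1), Nat.mod_lt _ (Nat.succ_pos m)⟩ : Fin (m+1)) ∈ B then 1 else 0

def cnt (B : Finset (Fin (m+1))) (t : ℕ) : ℕ := ∑ j ∈ Finset.range t, ind B j

def shf (c : Fin (m+1)) (B : Finset (Fin (m+1))) : Finset (Fin (m+1)) :=
  B.image (fun x => x - c)

def DomB (n : ℕ) (B : Finset (Fin (m+1))) : Prop :=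
  ∀ t : ℕ, t < m + 1 → t ≤ n * (B.filter (fun x => x.val < t)).card

def fv (n : ℕ) (B : Finset (Fin (m+1))) (t : ℕ) : ℤ := n * cnt B t - t

lemma ind_period (B : Finset (Fin (m+1))) (j : ℕ) : ind B (j + (m+1)) = ind B j := by
  unfold ind
  congr 2
  simp [Nat.add_mod_right]

lemma cnt_L (B : Finset (Fin (m+1))) : cnt B (m+1) = B.card := by
  unfold cnt
  rw [← Fin.sum_univ_eq_sum_range]
  have h : ∀ x : Fin (m+1), ind B x.val = if x ∈ B then 1 else 0 := by
    intro x
    have hx : (⟨x.val % (m+1), Nat.mod_lt _ (Nat.succ_pos m)⟩ : Fin (m+1)) = x :=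
      Fin.ext (Nat.mod_eq_of_lt x.isLt)
    rw [ind, hx]
  rw [Finset.sum_congr rfl (fun x _ => h x), Finset.sum_ite_mem, Finset.univ_inter,
    Finset.sum_const, smul_eq_mul, mul_one]

lemma cnt_add_L (B : Finset (Fin (m+1))) (t : ℕ) : cnt B (t + (m+1)) = cnt B t + B.card := by
  induction t with
  | zero =>
    show cnt B (0 + (m+1)) = cnt B 0 + B.card
    rw [Nat.zero_add, cnt_L]
    simp [cnt]
  | succ t ih =>
    have h1 : t + 1 + (m+1) = (t + (m+1)) + 1 := by omega
    rw [h1]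
    unfold cnt at *
    rw [Finset.sum_range_succ, ih, ind_period, Finset.sum_range_succ]
    omega

lemma fin_sub_val (x c : Fin (m+1)) : (x - c).val = (x.val + (m+1) - c.val) % (m+1) := by
  rw [Fin.sub_def]
  show ((m+1) - c.val + x.val) % (m+1) = _
  congr 1
  have := c.isLt
  omega

lemma sub_val_eq {c : Fin (m+1)} {j : ℕ} (h1 : c.val ≤ j) (h2 : j < c.val + (m+1)) :
    ((⟨j % (m+1), Nat.mod_lt _ (Nat.succ_pos m)⟩ : Fin (m+1)) - c).val = j - c.val := by
  rw [fin_sub_val]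
  have hc := c.isLt
  have key : (j % (m+1) + (m+1) - c.val) % (m+1) = (j + (m+1) - c.val) % (m+1) := by
    have h3 : j % (m+1) + (m+1) - c.val = j % (m+1) + ((m+1) - c.val) := by omega
    have h4 : j + (m+1) - c.val = j + ((m+1) - c.val) := by omega
    rw [h3, h4]
    exact Nat.ModEq.add_right _ (Nat.mod_modEq j (m+1))
  rw [key]
  have h5 : j + (m+1) - c.val = (j - c.val) + (m+1) := by omega
  rw [h5, Nat.add_mod_right, Nat.mod_eq_of_lt (by omega)]

lemma cnt_shift (B : Finset (Fin (m+1))) (c : Fin (m+1)) {t : ℕ} (ht : t ≤ m+1) :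
    cnt B (c.val + t) = cnt B c.val + ((shf c B).filter (fun y => y.val < t)).card := by
  have hc := c.isLt
  have hsplit : cnt B (c.val + t) = cnt B c.val + ∑ j ∈ Finset.Ico c.val (c.val + t), ind B j := by
    simp only [cnt, Finset.range_eq_Ico]
    rw [← Finset.sum_Ico_consecutive _ (Nat.zero_le c.val) (Nat.le_add_right c.val t)]
  rw [hsplit]
  congr 1
  have hcard : ∑ j ∈ Finset.Ico c.val (c.val + t), ind B j =
      ((Finset.Ico c.val (c.val + t)).filter
        (fun j => (⟨j % (m+1), Nat.mod_lt _ (Nat.succ_pos m)⟩ : Fin (m+1)) ∈ B)).card := by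
    rw [Finset.card_filter]
    rfl
  rw [hcard]
  apply Finset.card_bij' (fun j hj => (⟨j % (m+1), Nat.mod_lt _ (Nat.succ_pos m)⟩ : Fin (m+1)) - c)
    (fun y hy => c.val + y.val)
  · intro j hj
    rw [Finset.mem_filter, Finset.mem_Ico] at hj
    rw [Finset.mem_filter]
    constructor
    · exact Finset.mem_image.2 ⟨_, hj.2, rfl⟩
    · rw [sub_val_eq hj.1.1 (by omega)]
      omega
  · intro y hy
    rw [Finset.mem_filter] at hy
    obtain ⟨hy1, hy2⟩ := hy
    obtain ⟨x, hx, rfl⟩ := Finset.mem_image.1 hy1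
    have hx' := x.isLt
    have hxv : (x - c).val = if c.val ≤ x.val then x.val - c.val else x.val + (m+1) - c.val := by
      rw [fin_sub_val]
      split_ifs with h
      · have h5 : x.val + (m+1) - c.val = (x.val - c.val) + (m+1) := by omega
        rw [h5, Nat.add_mod_right, Nat.mod_eq_of_lt (by omega)]
      · rw [Nat.mod_eq_of_lt (by omega)]
    have hmem : (⟨(c.val + (x - c).val) % (m+1), Nat.mod_lt _ (Nat.succ_pos m)⟩ : Fin (m+1)) = x := by
      apply Fin.ext
      show (c.val + (x - c).val) % (m+1) = x.val
      rw [hxv]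
      split_ifs with h
      · rw [show c.val + (x.val - c.val) = x.val by omega, Nat.mod_eq_of_lt hx']
      · rw [show c.val + (x.val + (m+1) - c.val) = x.val + (m+1) by omega, Nat.add_mod_right,
          Nat.mod_eq_of_lt hx']
    rw [Finset.mem_filter, Finset.mem_Ico]
    refine ⟨⟨Nat.le_add_right _ _, by omega⟩, ?_⟩
    rw [hmem]
    exact hx
  · intro j hj
    rw [Finset.mem_filter, Finset.mem_Ico] at hj
    rw [sub_val_eq hj.1.1 (by omega)]
    omega
  · intro y hy
    rw [Finset.mem_filter] at hy
    obtain ⟨hy1, hy2⟩ := hy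
    have hy' := y.isLt
    apply Fin.ext
    rw [sub_val_eq (Nat.le_add_right c.val y.val) (by omega)]
    omega

lemma dom_shf_iff (n : ℕ) (B : Finset (Fin (m+1))) (c : Fin (m+1)) :
    DomB n (shf c B) ↔ ∀ t : ℕ, 0 < t → t < m+1 → fv n B c.val ≤ fv n B (c.val + t) := by
  unfold DomB fv
  constructor
  · intro h t ht0 ht
    have := h t ht
    rw [cnt_shift B c (le_of_lt ht)]
    push_cast [mul_add]
    omega
  · intro h t ht
    rcases Nat.eq_zero_or_pos t with rfl | ht0
    · omega
    have := h t ht0 ht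
    rw [cnt_shift B c (le_of_lt ht)] at this
    push_cast [mul_add] at this
    omega

end Cycle

-- Section 6: the cycle lemma: unique good rotation
section Cycle2

variable {m n i : ℕ}

lemma fv_period (B : Finset (Fin (m+1))) (hB : B.card = i) (hm : m = i * n) (t : ℕ) :
    fv n B (t + (m+1)) = fv n B t - 1 := by
  subst hm
  unfold fv
  rw [cnt_add_L, hB]
  push_cast [mul_add]
  ring

lemma exists_unique_shift (B : Finset (Fin (m+1))) (hB : B.card = i) (hm : m = i * n) :
    ∃! c : Fin (m+1), DomB n (shf c B) := by
  have hex : ∃ c, c < m + 1 ∧ ∀ t < m + 1, fv n B c ≤ fv n B t := by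
    obtain ⟨c, hc, hmin⟩ := Finset.exists_min_image (Finset.range (m+1)) (fv n B)
      ⟨0, Finset.mem_range.2 (Nat.succ_pos m)⟩
    exact ⟨c, Finset.mem_range.1 hc, fun t ht => hmin t (Finset.mem_range.2 ht)⟩
  classical
  set c₀ := Nat.find hex with hc₀
  obtain ⟨hc₀lt, hc₀min⟩ := Nat.find_spec hex
  rw [← hc₀] at hc₀lt hc₀min
  have hstrict : ∀ t < c₀, fv n B c₀ < fv n B t := by
    intro t ht
    have h1 := Nat.find_min hex ht
    push_neg at h1
    obtain ⟨s, hs, hfs⟩ := h1 (lt_trans ht hc₀lt)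
    exact lt_of_le_of_lt (hc₀min s hs) hfs
  refine ⟨⟨c₀, hc₀lt⟩, ?_, ?_⟩
  · show DomB n (shf ⟨c₀, hc₀lt⟩ B)
    rw [dom_shf_iff]
    intro t ht0 ht
    show fv n B c₀ ≤ fv n B (c₀ + t)
    rcases lt_or_ge (c₀ + t) (m+1) with h | h
    · exact hc₀min _ h
    · have hs : c₀ + t - (m+1) < c₀ := by omega
      have heq : c₀ + t = (c₀ + t - (m+1)) + (m+1) := by omega
      rw [heq, fv_period B hB hm]
      have := hstrict _ hs
      omega
  · intro c' hc'
    rw [dom_shf_iff] at hc'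
    apply Fin.ext
    show c'.val = c₀
    have hc'lt := c'.isLt
    have hc'strict : ∀ t, t < c'.val → fv n B c'.val < fv n B t := by
      intro t ht
      have h1 := hc' (t + (m+1) - c'.val) (by omega) (by omega)
      rw [show c'.val + (t + (m+1) - c'.val) = t + (m+1) by omega,
        fv_period B hB hm] at h1
      omega
    have hc'min : ∀ t < m + 1, fv n B c'.val ≤ fv n B t := by
      intro t ht
      rcases lt_trichotomy t c'.val with h | h | h
      · exact le_of_lt (hc'strict t h)
      · exact le_of_eq (by rw [h])
      · have h1 := hc' (t - c'.val) (by omega) (by omega)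
        rw [show c'.val + (t - c'.val) = t by omega] at h1
        exact h1
    have hle : c₀ ≤ c'.val := Nat.find_min' hex ⟨hc'lt, hc'min⟩
    rcases Nat.eq_or_lt_of_le hle with h | h
    · omega
    · have h1 := hc'strict c₀ h
      have h2 := hc₀min c'.val hc'lt
      omega

lemma shf_shf (B : Finset (Fin (m+1))) (c d : Fin (m+1)) :
    shf d (shf c B) = shf (c + d) B := by
  unfold shf
  rw [Finset.image_image]
  apply Finset.image_congr
  intro x _
  show x - c - d = x - (c + d)
  rw [sub_sub]

lemma shf_zero (B : Finset (Fin (m+1))) : shf 0 B = B := by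
  unfold shf
  simp

lemma shf_card (B : Finset (Fin (m+1))) (c : Fin (m+1)) : (shf c B).card = B.card := by
  unfold shf
  apply Finset.card_image_of_injective
  intro x y h
  simpa using congrArg (· + c) h

lemma count_domB (hn : 0 < n) (hi : 0 < i) (hm : m = i * n) :
    (m + 1).choose i = (m + 1) * Nat.card {B : Finset (Fin (m+1)) // B.card = i ∧ DomB n B} := by
  classical
  have key : ∀ B : Finset (Fin (m+1)), B.card = i → ∃! c : Fin (m+1), DomB n (shf c B) :=
    fun B hB => exists_unique_shift B hB hm
  -- bijection {B // B.card = i} → Fin (m+1) × {B // B.card = i ∧ DomB n B}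
  have hbij : ∃ f : {B : Finset (Fin (m+1)) // B.card = i} →
      Fin (m+1) × {B : Finset (Fin (m+1)) // B.card = i ∧ DomB n B}, Function.Bijective f := by
    refine ⟨fun B => ⟨(key B.1 B.2).choose, ⟨shf (key B.1 B.2).choose B.1,
      by rw [shf_card]; exact B.2, (key B.1 B.2).choose_spec.1⟩⟩, ?_, ?_⟩
    · rintro ⟨B, hB⟩ ⟨B', hB'⟩ h
      simp only [Prod.mk.injEq, Subtype.mk.injEq] at h
      obtain ⟨h1, h2⟩ := h
      apply Subtype.ext
      show B = B'
      have := congrArg (shf (-(key B hB).choose)) h2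
      rw [shf_shf, shf_shf, ← h1, add_neg_cancel, shf_zero, shf_zero] at this
      exact this
    · rintro ⟨c, ⟨D, hD, hDom⟩⟩
      refine ⟨⟨shf (-c) D, by rw [shf_card]; exact hD⟩, ?_⟩
      have h1 : shf c (shf (-c) D) = D := by
        rw [shf_shf, neg_add_cancel, shf_zero]
      have h2 : (key (shf (-c) D) (by rw [shf_card]; exact hD)).choose = c :=
        ((key (shf (-c) D) (by rw [shf_card]; exact hD)).choose_spec.2 c
          (show DomB n (shf c (shf (-c) D)) by rw [h1]; exact hDom)).symm
      exact Prod.ext h2 (Subtype.ext (by show shf _ (shf (-c) D) = D; rw [h2, h1]))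
  obtain ⟨f, hf⟩ := hbij
  have h1 : Nat.card {B : Finset (Fin (m+1)) // B.card = i} = (m+1).choose i := by
    rw [Nat.card_eq_fintype_card, Fintype.card_finset_len, Fintype.card_fin]
  rw [← h1, Nat.card_eq_of_bijective f hf, Nat.card_prod, Nat.card_eq_fintype_card,
    Fintype.card_fin]

end Cycle2

-- Section 7: assembly
section Assembly

lemma card_univ_filter_le {m : ℕ} (g : Fin m) :
    (Finset.univ.filter (· ≤ g)).card = g.val + 1 := by
  have h : Finset.univ.filter (· ≤ g) = Finset.Iic g := by
    ext x; simp
  rw [h, Fin.card_Iic]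

lemma filt_eq {m : ℕ} (M : Finset (Fin m)) (g : Fin m) :
    (M.map Fin.castSuccEmb).filter (fun x => x.val < g.val + 1) =
      (M.filter (· ≤ g)).map Fin.castSuccEmb := by
  ext x
  simp only [Finset.mem_filter, Finset.mem_map, Fin.coe_castSuccEmb]
  constructor
  · rintro ⟨⟨y, hy, rfl⟩, h2⟩
    rw [Fin.coe_castSucc] at h2
    exact ⟨y, ⟨hy, Fin.le_def.2 (by omega)⟩, rfl⟩
  · rintro ⟨y, ⟨hy1, hy2⟩, rfl⟩
    rw [Fin.le_def] at hy2
    exact ⟨⟨y, hy1, rfl⟩, by rw [Fin.coe_castSucc]; omega⟩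

lemma cardA {i n : ℕ} (hn : 0 < n) (hi : 0 < i) [NeZero (i * n)] :
    Nat.card {P : Finset (Finset (Fin (i * n))) // IsNCP n Finset.univ P} =
      Nat.card {M : Finset (Fin (i * n)) // M.card = i ∧ Good n Finset.univ M} := by
  have hPcard : ∀ P : Finset (Finset (Fin (i * n))), IsNCP n Finset.univ P → P.card = i := by
    intro P hP
    have h := ncp_G_card hP
    rw [Finset.card_univ, Fintype.card_fin] at h
    have h2 : n * P.card = n * i := by rw [← h, mul_comm]
    exact Nat.eq_of_mul_eq_mul_left hn h2
  apply Nat.card_eq_of_bijective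
    (f := fun P => ⟨mins P.1, by rw [mins_card hn P.2, hPcard P.1 P.2], good_mins hn P.2⟩)
  constructor
  · rintro ⟨P, hP⟩ ⟨Q, hQ⟩ h
    simp only [Subtype.mk.injEq] at h ⊢
    exact ncp_ext hn (Finset.univ.card) Finset.univ P Q (le_refl _) hP hQ h
  · rintro ⟨M, hMc, hMg⟩
    obtain ⟨P, hP, hminsP⟩ := ncp_exists hn (Finset.univ.card) Finset.univ M (le_refl _) hMg
      (by rw [Finset.card_univ, Fintype.card_fin, hMc, mul_comm])
    exact ⟨⟨P, hP⟩, by simp only [Subtype.mk.injEq]; exact hminsP⟩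

lemma cardB {i n : ℕ} (hn : 0 < n) (hi : 0 < i) [NeZero (i * n)] :
    Nat.card {M : Finset (Fin (i * n)) // M.card = i ∧ Good n Finset.univ M} =
      Nat.card {B : Finset (Fin (i * n + 1)) // B.card = i ∧ DomB n B} := by
  have hdom : ∀ M : Finset (Fin (i * n)), M.card = i → Good n Finset.univ M →
      DomB n (M.map Fin.castSuccEmb) := by
    intro M hMc hMg t ht
    rcases Nat.eq_zero_or_pos t with rfl | ht0
    · exact Nat.zero_le _
    obtain ⟨g', hg'⟩ : ∃ g', t = g' + 1 := ⟨t - 1, by omega⟩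
    have hg'lt : g' < i * n := by omega
    set g : Fin (i * n) := ⟨g', hg'lt⟩ with hg
    have h1 := hMg.2 g (Finset.mem_univ g)
    rw [card_univ_filter_le] at h1
    rw [hg', show (g' : ℕ) + 1 = g.val + 1 by rw [hg], filt_eq, Finset.card_map]
    exact h1
  apply Nat.card_eq_of_bijective
    (f := fun M => ⟨M.1.map Fin.castSuccEmb, by rw [Finset.card_map]; exact M.2.1,
      hdom M.1 M.2.1 M.2.2⟩)
  constructor
  · rintro ⟨M, hM⟩ ⟨M', hM'⟩ h
    simp only [Subtype.mk.injEq] at h ⊢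
    exact Finset.map_injective _ h
  · rintro ⟨B, hBc, hBd⟩
    have hlast : Fin.last (i * n) ∉ B := by
      intro hmem
      have h := hBd (i * n) (Nat.lt_succ_self _)
      have hsub : B.filter (fun x => x.val < i * n) ⊆ B.erase (Fin.last (i * n)) := by
        intro x hx
        rw [Finset.mem_filter] at hx
        refine Finset.mem_erase.2 ⟨fun hc => ?_, hx.1⟩
        rw [hc, Fin.val_last] at hx
        omega
      have hcard : (B.filter (fun x => x.val < i * n)).card ≤ i - 1 := by
        refine le_trans (Finset.card_le_card hsub) ?_
        rw [Finset.card_erase_of_mem hmem, hBc]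
      obtain ⟨d, hd⟩ : ∃ d, i = d + 1 := ⟨i - 1, by omega⟩
      have h2 : (B.filter (fun x => x.val < i * n)).card ≤ d := by omega
      have h3 : i * n ≤ n * d := le_trans h (Nat.mul_le_mul_left n h2)
      rw [hd, Nat.succ_mul, mul_comm d n] at h3
      have : 0 < n := hn
      omega
    have hex : ∃ M : Finset (Fin (i * n)), M.map Fin.castSuccEmb = B := by
      refine ⟨B.preimage Fin.castSucc ((Fin.castSucc_injective _).injOn), ?_⟩
      ext x
      simp only [Finset.mem_map, Fin.coe_castSuccEmb]
      constructor
      · rintro ⟨y, hy, rfl⟩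
        rw [Finset.mem_preimage] at hy
        exact hy
      · intro hx
        have hne : x ≠ Fin.last (i * n) := fun h => hlast (h ▸ hx)
        obtain ⟨y, rfl⟩ := Fin.exists_castSucc_eq.2 hne
        exact ⟨y, by rw [Finset.mem_preimage]; exact hx, rfl⟩
    obtain ⟨M, hMmap⟩ := hex
    have hMc : M.card = i := by
      rw [← hMmap, Finset.card_map] at hBc
      exact hBc
    have hMg : Good n Finset.univ M := by
      refine ⟨Finset.subset_univ M, fun g _ => ?_⟩
      have h := hBd (g.val + 1) (by have := g.isLt; omega)
      rw [← hMmap, filt_eq, Finset.card_map] at h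
      rw [card_univ_filter_le]
      exact h
    exact ⟨⟨M, hMc, hMg⟩, by simp only [Subtype.mk.injEq]; exact hMmap⟩

end Assembly


/-- The number of sibling portraits of an `n`-gon inside a round gap
of degree `i` in which every polygon maps one-to-one (each polygon is an `n`-gon)
equals the Fuss–Catalan number `(n*i).choose i / ((n-1)*i + 1)`. -/
theorem card_one_to_one_portraits (i n : ℕ) (hi : 1 ≤ i) (hn : 2 ≤ n) :
    Nat.card {PP : Finset (Finset (Fin (i * n))) //
        IsPortrait i n PP ∧ ∀ S ∈ PP, S.card = n} =
      (n * i).choose i / ((n - 1) * i + 1) := by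
  have hn0 : 0 < n := by omega
  have hi0 : 0 < i := by omega
  haveI : NeZero (i * n) := ⟨Nat.mul_ne_zero (by omega) (by omega)⟩
  have step1 : Nat.card {PP : Finset (Finset (Fin (i * n))) //
        IsPortrait i n PP ∧ ∀ S ∈ PP, S.card = n} =
      Nat.card {P : Finset (Finset (Fin (i * n))) // IsNCP n Finset.univ P} :=
    Nat.card_congr (Equiv.subtypeEquivRight (fun PP => portrait_iff hn PP))
  rw [step1, cardA hn0 hi0, cardB hn0 hi0]
  set D := Nat.card {B : Finset (Fin (i * n + 1)) // B.card = i ∧ DomB n B} with hD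
  have step4 : (i * n + 1).choose i = (i * n + 1) * D := count_domB hn0 hi0 rfl
  have hile : i ≤ n * i := Nat.le_mul_of_pos_left i hn0
  have e1 : (n - 1) * i + 1 = i * n + 1 - i := by
    have h1 : (n - 1) * i = n * i - 1 * i := Nat.sub_mul n 1 i
    rw [h1, one_mul, mul_comm i n]
    omega
  have hgoal : D * ((n - 1) * i + 1) * (i * n + 1) = (n * i).choose i * (i * n + 1) := by
    calc D * ((n - 1) * i + 1) * (i * n + 1)
        = ((i * n + 1) * D) * ((n - 1) * i + 1) := by ring
      _ = (i * n + 1).choose i * (i * n + 1 - i) := by rw [← step4, e1]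
      _ = (i * n).choose i * (i * n + 1) := (Nat.choose_mul_succ_eq (i * n) i).symm
      _ = (n * i).choose i * (i * n + 1) := by rw [mul_comm i n]
  have hDK : D * ((n - 1) * i + 1) = (n * i).choose i :=
    Nat.eq_of_mul_eq_mul_right (Nat.succ_pos _) hgoal
  rw [← hDK, Nat.mul_div_cancel D (by omega)]
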